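/- Let 1 < p < ∞ and let c = (c_j)_{j ∈ ℕ} be a positive sequence. Then the family (|s|!/s! · c^s)_{s ∈ F} belongs to ℓ_p(F) if and only if ‖c‖_{ℓ_1(ℕ)} ≤ 1. -/

import Mathlib

/-- `|s|!/s!` for a finitely supported multi-index `s`. -/
noncomputable def mcoef (s : ℕ →₀ ℕ) : ℝ :=
  (Nat.factorial (s.sum fun _ n => n) : ℝ) / ∏ j ∈ s.support, (Nat.factorial (s j) : ℝ)

/-- `c^s = ∏_j c_j^{s_j}`. -/
noncomputable def fpow (c : ℕ → ℝ) (s : ℕ →₀ ℕ) : ℝ :=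
  ∏ j ∈ s.support, c j ^ s j

namespace Stmt3Aux

open Finset Real
open scoped ENNReal NNReal

/-- degree of a multi-index -/
def deg (s : ℕ →₀ ℕ) : ℕ := s.sum fun _ n => n

lemma deg_eq_sum {s : ℕ →₀ ℕ} {A : Finset ℕ} (hA : s.support ⊆ A) :
    deg s = ∑ j ∈ A, s j := by
  rw [deg]
  exact Finsupp.sum_of_support_subset s hA (fun _ n => n) (fun i _ => rfl)

lemma mcoef_pos (s : ℕ →₀ ℕ) : 0 < mcoef s := by
  apply div_pos
  · exact_mod_cast Nat.factorial_pos _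
  · exact Finset.prod_pos fun j _ => by exact_mod_cast Nat.factorial_pos _

lemma fpow_pos {c : ℕ → ℝ} (hc : ∀ j, 0 < c j) (s : ℕ →₀ ℕ) : 0 < fpow c s :=
  Finset.prod_pos fun j _ => pow_pos (hc j) _

lemma a_pos {c : ℕ → ℝ} (hc : ∀ j, 0 < c j) (s : ℕ →₀ ℕ) : 0 < mcoef s * fpow c s :=
  mul_pos (mcoef_pos s) (fpow_pos hc s)

lemma a_eq_on_finset (c : ℕ → ℝ) (s : ℕ →₀ ℕ) (A : Finset ℕ) (hA : s.support ⊆ A) :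
    mcoef s * fpow c s
      = (Nat.multinomial A s : ℝ) * ∏ j ∈ A, c j ^ s j := by
  have h1 : (Nat.multinomial A s : ℝ) = (Nat.factorial (∑ j ∈ A, s j) : ℝ) /
      ∏ j ∈ A, (Nat.factorial (s j) : ℝ) := by
    rw [eq_div_iff (by positivity), mul_comm]
    rw [← Nat.cast_prod, ← Nat.cast_mul, Nat.multinomial_spec]
  have h2 : ∏ j ∈ A, (Nat.factorial (s j) : ℝ) = ∏ j ∈ s.support, (Nat.factorial (s j) : ℝ) := by
    refine (Finset.prod_subset hA ?_).symm
    intro x _ hx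
    rw [Finsupp.notMem_support_iff.mp hx]
    simp
  have h3 : ∏ j ∈ A, c j ^ s j = ∏ j ∈ s.support, c j ^ s j := by
    refine (Finset.prod_subset hA ?_).symm
    intro x _ hx
    rw [Finsupp.notMem_support_iff.mp hx]
    simp
  rw [h1, h2, h3, mcoef, fpow, ← deg_eq_sum hA]
  rfl

lemma deg_eq_zero {s : ℕ →₀ ℕ} (h : deg s = 0) : s = 0 := by
  ext j
  simp only [Finsupp.coe_zero, Pi.zero_apply]
  by_contra hj
  have hjs : j ∈ s.support := Finsupp.mem_support_iff.mpr hj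
  have : s j ≤ deg s := by
    rw [deg_eq_sum (le_refl s.support)]
    exact Finset.single_le_sum (fun i _ => Nat.zero_le _) hjs
  omega

lemma a_of_zero (c : ℕ → ℝ) : mcoef 0 * fpow c 0 = 1 := by
  simp [mcoef, fpow]

lemma sum_a_le_one {c : ℕ → ℝ} (hc : ∀ j, 0 < c j) (hsc : Summable c) (ht : (∑' j, c j) ≤ 1)
    {n : ℕ} (V : Finset (ℕ →₀ ℕ)) (hV : ∀ s ∈ V, deg s = n) :
    ∑ s ∈ V, mcoef s * fpow c s ≤ 1 := by
  classical
  set A := V.biUnion (fun s => s.support) with hAdef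
  have hsub : ∀ s ∈ V, s.support ⊆ A := fun s hs => Finset.subset_biUnion_of_mem _ hs
  have ha : ∀ s ∈ V, mcoef s * fpow c s = (Nat.multinomial A s : ℝ) * ∏ j ∈ A, c j ^ s j :=
    fun s hs => a_eq_on_finset c s A (hsub s hs)
  have key : ∑ s ∈ V, (mcoef s * fpow c s) = ∑ k ∈ V.image (fun s : ℕ →₀ ℕ => (⇑s : ℕ → ℕ)),
      ((Nat.multinomial A k : ℝ) * ∏ j ∈ A, c j ^ k j) := by
    rw [Finset.sum_image (by intro x _ y _ h; exact DFunLike.coe_injective h)]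
    exact Finset.sum_congr rfl ha
  have hsubset : V.image (fun s : ℕ →₀ ℕ => (⇑s : ℕ → ℕ)) ⊆ Finset.piAntidiag A n := by
    intro k hk
    simp only [Finset.mem_image] at hk
    obtain ⟨s, hs, rfl⟩ := hk
    rw [Finset.mem_piAntidiag]
    constructor
    · rw [← hV s hs]
      exact (deg_eq_sum (hsub s hs)).symm
    · intro i hi
      exact hsub s hs (by simp only [Finsupp.mem_support_iff]; exact hi)
  calc ∑ s ∈ V, (mcoef s * fpow c s) ≤ ∑ k ∈ Finset.piAntidiag A n,
        ((Nat.multinomial A k : ℝ) * ∏ j ∈ A, c j ^ k j) := by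
        rw [key]
        refine Finset.sum_le_sum_of_subset_of_nonneg hsubset (fun k _ _ => ?_)
        have : (0:ℝ) ≤ ∏ j ∈ A, c j ^ k j := Finset.prod_nonneg fun j _ => pow_nonneg (hc j).le _
        positivity
    _ = (∑ j ∈ A, c j) ^ n := (Finset.sum_pow_eq_sum_piAntidiag A c n).symm
    _ ≤ 1 := by
        apply pow_le_one₀ (Finset.sum_nonneg fun j _ => (hc j).le)
        exact le_trans (Summable.sum_le_tsum A (fun i _ => (hc i).le) hsc) ht

/-! ### Poisson-type bound -/

noncomputable def pf (μ : ℝ) (m : ℕ) : ℝ := μ ^ m / (Nat.factorial m : ℝ)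

lemma pf_succ (μ : ℝ) (m : ℕ) : pf μ (m+1) = pf μ m * (μ / (m+1)) := by
  have h1 : ((m+1 : ℕ) : ℝ) ≠ 0 := by positivity
  simp only [pf, Nat.factorial_succ, pow_succ]
  push_cast
  field_simp

lemma pf_nonneg {μ : ℝ} (hμ : 0 < μ) (m : ℕ) : 0 ≤ pf μ m := by
  have := hμ.le
  unfold pf; positivity

lemma pf_pos {μ : ℝ} (hμ : 0 < μ) (m : ℕ) : 0 < pf μ m := by
  unfold pf; positivity

lemma pf_le_exp {μ : ℝ} (hμ : 0 < μ) (m : ℕ) : pf μ m ≤ Real.exp μ := by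
  calc pf μ m ≤ ∑ i ∈ Finset.range (m+1), μ ^ i / (Nat.factorial i : ℝ) := by
        refine Finset.single_le_sum (f := fun i => μ ^ i / (Nat.factorial i : ℝ))
          (fun i _ => by positivity) (Finset.self_mem_range_succ m)
    _ ≤ Real.exp μ := Real.sum_le_exp_of_nonneg hμ.le _

lemma term_le_exp {μ : ℝ} (hμ : 0 < μ) (m : ℕ) :
    μ ^ m / (Nat.factorial m : ℝ) ≤ Real.exp μ := pf_le_exp hμ m

lemma pf_le_floor_of_le {μ : ℝ} (hμ : 0 < μ) :
    ∀ j m, m + j = Nat.floor μ → pf μ m ≤ pf μ (Nat.floor μ) := by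
  intro j
  induction j with
  | zero => intro m hm; simp at hm; rw [hm]
  | succ j ih =>
    intro m hm
    have hstep : pf μ m ≤ pf μ (m+1) := by
      rw [pf_succ]
      have h1 : (1:ℝ) ≤ μ / (m+1) := by
        rw [le_div_iff₀ (by positivity)]
        have : (m + 1 : ℕ) ≤ Nat.floor μ := by omega
        have h2 : ((m:ℝ) + 1) ≤ (Nat.floor μ : ℝ) := by exact_mod_cast this
        have h3 : (Nat.floor μ : ℝ) ≤ μ := Nat.floor_le hμ.le
        linarith
      nlinarith [pf_pos hμ m]
    exact le_trans hstep (ih (m+1) (by omega))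

lemma pf_le_floor_of_ge {μ : ℝ} (hμ : 0 < μ) :
    ∀ m, Nat.floor μ ≤ m → pf μ m ≤ pf μ (Nat.floor μ) := by
  intro m hm
  induction m, hm using Nat.le_induction with
  | base => exact le_refl _
  | succ m hm ih =>
    rw [pf_succ]
    have h1 : μ / (m+1) ≤ 1 := by
      rw [div_le_one (by positivity)]
      have : μ < Nat.floor μ + 1 := Nat.lt_floor_add_one μ
      have h2 : (Nat.floor μ : ℝ) ≤ (m:ℝ) := by exact_mod_cast hm
      linarith
    nlinarith [pf_pos hμ m, pf_nonneg hμ (Nat.floor μ), ih]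

lemma pf_le_floor {μ : ℝ} (hμ : 0 < μ) (m : ℕ) : pf μ m ≤ pf μ (Nat.floor μ) := by
  rcases le_or_gt m (Nat.floor μ) with h | h
  · exact pf_le_floor_of_le hμ (Nat.floor μ - m) m (by omega)
  · exact pf_le_floor_of_ge hμ m h.le

lemma pf_ratio_lower {μ : ℝ} (hμ : 0 < μ) (D : ℕ) :
    ∀ j, j ≤ D → pf μ (Nat.floor μ) * (μ / (μ + D)) ^ j ≤ pf μ (Nat.floor μ + j) := by
  intro j hj
  induction j with
  | zero => simp
  | succ j ih =>
    have ihj := ih (by omega)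
    have heq : Nat.floor μ + (j+1) = (Nat.floor μ + j) + 1 := rfl
    rw [pow_succ, heq, ← mul_assoc]
    have hm0 : (Nat.floor μ : ℝ) ≤ μ := Nat.floor_le hμ.le
    have hden : (0:ℝ) < (Nat.floor μ + j : ℕ) + 1 := by positivity
    have hratio : μ / (μ + D) ≤ μ / ((Nat.floor μ + j : ℕ) + 1) := by
      apply div_le_div_of_nonneg_left hμ.le hden
      push_cast
      have : (j:ℝ) + 1 ≤ (D:ℝ) := by exact_mod_cast Nat.succ_le_of_lt (by omega)
      linarith
    have hpos : 0 < μ / (μ + D) := by positivity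
    calc pf μ (Nat.floor μ) * (μ / (μ + D)) ^ j * (μ / (μ + D))
        ≤ pf μ (Nat.floor μ + j) * (μ / (μ + D)) := by
          exact mul_le_mul_of_nonneg_right ihj hpos.le
      _ ≤ pf μ (Nat.floor μ + j) * (μ / ((Nat.floor μ + j : ℕ) + 1)) := by
          exact mul_le_mul_of_nonneg_left hratio (pf_pos hμ _).le
      _ = pf μ (Nat.floor μ + j + 1) := by rw [pf_succ]

lemma ratio_pow_ge {μ : ℝ} (hμ : 0 < μ) {D : ℕ} (hD : (D:ℝ)^2 ≤ μ) :
    Real.exp (-1) ≤ (μ / (μ + D)) ^ D := by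
  have h1 : ((μ + D) / μ) ^ D ≤ Real.exp 1 := by
    have : (μ + D) / μ = 1 + D / μ := by field_simp
    rw [this]
    calc (1 + (D:ℝ)/μ) ^ D ≤ Real.exp ((D:ℝ)/μ) ^ D := by
          apply pow_le_pow_left₀ (by positivity)
          exact Real.add_one_le_exp _ |>.trans_eq' (by ring_nf)
      _ = Real.exp (D * (D/μ)) := by rw [← Real.exp_nat_mul]
      _ ≤ Real.exp 1 := by
          apply Real.exp_le_exp.mpr
          have h2 : (D:ℝ) * ((D:ℝ)/μ) = (D:ℝ)^2 / μ := by ring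
          rw [h2, div_le_one hμ]
          exact hD
  have h2 : (0:ℝ) < (μ + D)/μ := by positivity
  have h3 : μ / (μ + D) = (((μ + D)/μ))⁻¹ := by
    rw [inv_div]
  rw [h3, inv_pow, Real.exp_neg]
  exact inv_anti₀ (by positivity) h1

lemma sum_shift_le_exp {μ : ℝ} (hμ : 0 < μ) (m0 D : ℕ) :
    ∑ j ∈ Finset.Icc 1 D, pf μ (m0 + j) ≤ Real.exp μ := by
  classical
  have h1 : ∑ j ∈ Finset.Icc 1 D, pf μ (m0 + j)
      = ∑ i ∈ (Finset.Icc 1 D).image (fun j => m0 + j), pf μ i := by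
    rw [Finset.sum_image (by intro a _ b _ h; simp only at h; omega)]
  rw [h1]
  calc _ ≤ ∑ i ∈ Finset.range (m0 + D + 1), pf μ i := by
        apply Finset.sum_le_sum_of_subset_of_nonneg
        · intro i hi
          simp only [Finset.mem_image, Finset.mem_Icc] at hi
          rw [Finset.mem_range]; omega
        · intro i _ _; exact (pf_pos hμ i).le
    _ ≤ Real.exp μ := by
        simpa [pf] using Real.sum_le_exp_of_nonneg hμ.le (m0 + D + 1)

lemma poisson_bound {μ : ℝ} (hμ : 0 < μ) (m : ℕ) :
    μ ^ m / (Nat.factorial m : ℝ) ≤ 2 * Real.exp 1 * Real.exp μ / Real.sqrt μ := by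
  have hsμ : 0 < Real.sqrt μ := Real.sqrt_pos.mpr hμ
  have he1 : (1:ℝ) ≤ Real.exp 1 := by
    have := Real.add_one_le_exp (1:ℝ); linarith
  show pf μ m ≤ _
  rcases lt_or_ge μ 4 with h4 | h4
  · have hs2 : Real.sqrt μ < 2 := by
      nlinarith [Real.sq_sqrt hμ.le, Real.sqrt_nonneg μ]
    calc pf μ m ≤ Real.exp μ := pf_le_exp hμ m
      _ ≤ 2 * Real.exp 1 * Real.exp μ / Real.sqrt μ := by
          rw [le_div_iff₀ hsμ]
          nlinarith [Real.exp_pos μ]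
  · set m0 := Nat.floor μ with hm0
    set D := Nat.floor (Real.sqrt μ) with hD
    have hs2 : (2:ℝ) ≤ Real.sqrt μ := by
      nlinarith [Real.sq_sqrt hμ.le, Real.sqrt_nonneg μ]
    have hDle : (D:ℝ) ≤ Real.sqrt μ := Nat.floor_le (Real.sqrt_nonneg μ)
    have hD2 : (D:ℝ)^2 ≤ μ := by
      nlinarith [Real.sq_sqrt hμ.le, Real.sqrt_nonneg μ]
    have hDge : Real.sqrt μ / 2 ≤ (D:ℝ) := by
      have := Nat.lt_floor_add_one (Real.sqrt μ)
      rw [← hD] at this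
      linarith
    have hDpos : (0:ℝ) < (D:ℝ) := by linarith
    have hbase0 : (0:ℝ) ≤ μ / (μ + D) := by positivity
    have hbase1 : μ / (μ + D) ≤ 1 := by
      rw [div_le_one (by positivity)]; linarith
    have key : (D:ℝ) * (pf μ m0 * Real.exp (-1)) ≤ Real.exp μ := by
      calc (D:ℝ) * (pf μ m0 * Real.exp (-1))
          = ∑ _j ∈ Finset.Icc 1 D, pf μ m0 * Real.exp (-1) := by
            rw [Finset.sum_const, Nat.card_Icc]
            simp [nsmul_eq_mul]
        _ ≤ ∑ j ∈ Finset.Icc 1 D, pf μ (m0 + j) := by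
            apply Finset.sum_le_sum
            intro j hj
            rw [Finset.mem_Icc] at hj
            calc pf μ m0 * Real.exp (-1)
                ≤ pf μ m0 * (μ / (μ + D)) ^ D := by
                  exact mul_le_mul_of_nonneg_left (ratio_pow_ge hμ hD2) (pf_pos hμ m0).le
              _ ≤ pf μ m0 * (μ / (μ + D)) ^ j := by
                  exact mul_le_mul_of_nonneg_left
                    (pow_le_pow_of_le_one hbase0 hbase1 hj.2) (pf_pos hμ m0).le
              _ ≤ pf μ (m0 + j) := pf_ratio_lower hμ D j hj.2
        _ ≤ Real.exp μ := sum_shift_le_exp hμ m0 D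
    have hfm0 : pf μ m0 ≤ 2 * Real.exp 1 * Real.exp μ / Real.sqrt μ := by
      have h5 : pf μ m0 ≤ Real.exp μ * Real.exp 1 / D := by
        rw [le_div_iff₀ hDpos]
        have hexpinv : Real.exp (-1) = (Real.exp 1)⁻¹ := by
          rw [Real.exp_neg]
        rw [hexpinv] at key
        have hE : (0:ℝ) < Real.exp 1 := Real.exp_pos 1
        have := mul_le_mul_of_nonneg_right key hE.le
        rw [mul_assoc, mul_assoc, inv_mul_cancel₀ (ne_of_gt hE), mul_one] at this
        nlinarith [pf_pos hμ m0]
      calc pf μ m0 ≤ Real.exp μ * Real.exp 1 / D := h5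
        _ ≤ Real.exp μ * Real.exp 1 / (Real.sqrt μ / 2) := by
            apply div_le_div_of_nonneg_left (by positivity) (by positivity) hDge
        _ = 2 * Real.exp 1 * Real.exp μ / Real.sqrt μ := by
            field_simp
    exact le_trans (pf_le_floor hμ m) hfm0

lemma factorial_upper {n : ℕ} (hn : 1 ≤ n) :
    (Nat.factorial n : ℝ) ≤ Real.exp 1 * Real.sqrt n * ((n : ℝ) / Real.exp 1) ^ n := by
  have hn0 : (0:ℝ) < (n:ℝ) := by exact_mod_cast hn
  have hden : (0:ℝ) < Real.sqrt (2 * n) * ((n : ℝ) / Real.exp 1) ^ n := by positivity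
  have hS : Stirling.stirlingSeq n ≤ Real.exp 1 / Real.sqrt 2 := by
    obtain ⟨m, rfl⟩ := Nat.exists_eq_add_of_le hn
    have := Stirling.stirlingSeq'_antitone (Nat.zero_le m)
    simpa [Function.comp, Stirling.stirlingSeq_one, Nat.add_comm] using this
  have hfact : (Nat.factorial n : ℝ) =
      Stirling.stirlingSeq n * (Real.sqrt (2 * n) * ((n : ℝ) / Real.exp 1) ^ n) := by
    rw [Stirling.stirlingSeq, div_mul_cancel₀]
    exact ne_of_gt hden
  rw [hfact]
  have h2 : Real.sqrt (2 * n) = Real.sqrt 2 * Real.sqrt n := Real.sqrt_mul (by norm_num) _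
  calc Stirling.stirlingSeq n * (Real.sqrt (2 * n) * ((n : ℝ) / Real.exp 1) ^ n)
      ≤ (Real.exp 1 / Real.sqrt 2) * (Real.sqrt (2 * n) * ((n : ℝ) / Real.exp 1) ^ n) := by
        exact mul_le_mul_of_nonneg_right hS hden.le
    _ = Real.exp 1 * Real.sqrt n * ((n : ℝ) / Real.exp 1) ^ n := by
        rw [h2]; field_simp
lemma pointwise_bound {c : ℕ → ℝ} (hc : ∀ j, 0 < c j) (hsc : Summable c) (ht : (∑' j, c j) ≤ 1)
    (k : ℕ) (s : ℕ →₀ ℕ) (hn : 1 ≤ deg s) :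
    mcoef s * fpow c s ≤
      (Real.exp 1 * ∏ j ∈ Finset.range k, (2 * Real.exp 1 / Real.sqrt (c j))) *
        (deg s : ℝ) ^ (((1 : ℝ) - k) / 2) := by
  classical
  set n := deg s with hdegn
  have hn0 : (0:ℝ) < (n:ℝ) := by exact_mod_cast hn
  set S := s.support with hS
  set K := Finset.range k with hK
  set U := S ∪ K with hU
  have hSU : S ⊆ U := Finset.subset_union_left
  have hKU : K ⊆ U := Finset.subset_union_right
  have hfactne : ∀ j : ℕ, ((Nat.factorial (s j) : ℝ)) ≠ 0 := fun j => by positivity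
  -- step 1
  have h1 : mcoef s * fpow c s
      = (Nat.factorial n : ℝ) * ∏ j ∈ S, (c j ^ s j / (Nat.factorial (s j) : ℝ)) := by
    rw [mcoef, fpow, Finset.prod_div_distrib]
    field_simp
    simp only [hdegn, deg, hS]; ring
  -- step 2
  have h2 : ∏ j ∈ S, (((n:ℝ) * c j) ^ s j / (Nat.factorial (s j) : ℝ))
      = (n:ℝ) ^ n * ∏ j ∈ S, (c j ^ s j / (Nat.factorial (s j) : ℝ)) := by
    have : ∀ j ∈ S, ((n:ℝ) * c j) ^ s j / (Nat.factorial (s j) : ℝ)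
        = (n:ℝ) ^ s j * (c j ^ s j / (Nat.factorial (s j) : ℝ)) := by
      intro j _; rw [mul_pow]; ring
    rw [Finset.prod_congr rfl this, Finset.prod_mul_distrib, Finset.prod_pow_eq_pow_sum,
      ← deg_eq_sum (le_refl S), ← hdegn]
  -- extend the product to U
  have h2' : ∏ j ∈ U, (((n:ℝ) * c j) ^ s j / (Nat.factorial (s j) : ℝ))
      = ∏ j ∈ S, (((n:ℝ) * c j) ^ s j / (Nat.factorial (s j) : ℝ)) := by
    refine (Finset.prod_subset hSU ?_).symm
    intro j _ hj
    rw [Finsupp.notMem_support_iff.mp hj]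
    simp
  -- per-factor bound
  have h3 : ∏ j ∈ U, (((n:ℝ) * c j) ^ s j / (Nat.factorial (s j) : ℝ))
      ≤ ∏ j ∈ U, (Real.exp ((n:ℝ) * c j) *
          (if j ∈ K then 2 * Real.exp 1 / Real.sqrt ((n:ℝ) * c j) else 1)) := by
    apply Finset.prod_le_prod
    · intro j _
      have := (hc j).le
      positivity
    · intro j _
      have hμ : (0:ℝ) < (n:ℝ) * c j := mul_pos hn0 (hc j)
      by_cases hj : j ∈ K
      · rw [if_pos hj]
        have := poisson_bound hμ (s j)
        calc ((n:ℝ) * c j) ^ s j / (Nat.factorial (s j) : ℝ)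
            ≤ 2 * Real.exp 1 * Real.exp ((n:ℝ) * c j) / Real.sqrt ((n:ℝ)*c j) := this
          _ = Real.exp ((n:ℝ)*c j) * (2 * Real.exp 1 / Real.sqrt ((n:ℝ)*c j)) := by ring
      · rw [if_neg hj, mul_one]
        exact term_le_exp hμ (s j)
  -- the exponential part
  have h4 : ∏ j ∈ U, Real.exp ((n:ℝ) * c j) ≤ Real.exp (n:ℝ) := by
    rw [← Real.exp_sum]
    apply Real.exp_le_exp.mpr
    rw [← Finset.mul_sum]
    have hsum : ∑ j ∈ U, c j ≤ 1 := le_trans (Summable.sum_le_tsum U (fun i _ => (hc i).le) hsc) ht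
    nlinarith [Finset.sum_nonneg (fun j (_ : j ∈ U) => (hc j).le)]
  -- the ite part
  have h5 : ∏ j ∈ U, (if j ∈ K then 2 * Real.exp 1 / Real.sqrt ((n:ℝ) * c j) else 1)
      = ∏ j ∈ K, (2 * Real.exp 1 / Real.sqrt ((n:ℝ) * c j)) := by
    rw [Finset.prod_ite_mem, Finset.inter_eq_right.mpr hKU]
  -- split sqrt
  have h6 : ∏ j ∈ K, (2 * Real.exp 1 / Real.sqrt ((n:ℝ) * c j))
      = (∏ j ∈ K, (2 * Real.exp 1 / Real.sqrt (c j))) * ((Real.sqrt n) ^ k)⁻¹ := by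
    have : ∀ j ∈ K, 2 * Real.exp 1 / Real.sqrt ((n:ℝ) * c j)
        = (2 * Real.exp 1 / Real.sqrt (c j)) * (Real.sqrt n)⁻¹ := by
      intro j _
      rw [Real.sqrt_mul hn0.le]
      field_simp
    rw [Finset.prod_congr rfl this, Finset.prod_mul_distrib]
    congr 1
    rw [Finset.prod_const, hK, Finset.card_range, inv_pow]
  have hprodK0 : (0:ℝ) ≤ ∏ j ∈ K, (2 * Real.exp 1 / Real.sqrt (c j)) :=
    Finset.prod_nonneg fun j _ => by positivity
  have hnn : (0:ℝ) < (n:ℝ)^n := by positivity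
  have hPU : ∏ j ∈ U, (((n:ℝ) * c j) ^ s j / (Nat.factorial (s j) : ℝ)) ≤
      Real.exp (n:ℝ) * ((∏ j ∈ K, (2 * Real.exp 1 / Real.sqrt (c j))) * ((Real.sqrt n)^k)⁻¹) := by
    calc ∏ j ∈ U, (((n:ℝ) * c j) ^ s j / (Nat.factorial (s j) : ℝ))
        ≤ ∏ j ∈ U, (Real.exp ((n:ℝ) * c j) *
            (if j ∈ K then 2 * Real.exp 1 / Real.sqrt ((n:ℝ) * c j) else 1)) := h3
      _ = (∏ j ∈ U, Real.exp ((n:ℝ) * c j)) *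
            ∏ j ∈ U, (if j ∈ K then 2 * Real.exp 1 / Real.sqrt ((n:ℝ) * c j) else 1) :=
          Finset.prod_mul_distrib
      _ = (∏ j ∈ U, Real.exp ((n:ℝ) * c j)) * ∏ j ∈ K, (2 * Real.exp 1 / Real.sqrt ((n:ℝ)*c j)) := by
          rw [h5]
      _ ≤ Real.exp (n:ℝ) * ∏ j ∈ K, (2 * Real.exp 1 / Real.sqrt ((n:ℝ)*c j)) := by
          apply mul_le_mul_of_nonneg_right h4
          exact Finset.prod_nonneg fun j _ => by positivity
      _ = Real.exp (n:ℝ) * ((∏ j ∈ K, (2 * Real.exp 1 / Real.sqrt (c j))) * ((Real.sqrt n)^k)⁻¹) := by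
          rw [h6]
  have ha : mcoef s * fpow c s = ((Nat.factorial n : ℝ) / (n:ℝ)^n) *
      ∏ j ∈ U, (((n:ℝ) * c j) ^ s j / (Nat.factorial (s j) : ℝ)) := by
    rw [h1, h2', h2]
    field_simp
  have hfe : (Nat.factorial n : ℝ) * Real.exp (n:ℝ) / (n:ℝ)^n ≤ Real.exp 1 * Real.sqrt n := by
    have h := factorial_upper hn
    rw [div_pow, Real.exp_one_pow] at h
    have h' := mul_le_mul_of_nonneg_right h (Real.exp_pos (n:ℝ)).le
    rw [mul_assoc, div_mul_cancel₀ _ (ne_of_gt (Real.exp_pos (n:ℝ)))] at h'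
    rw [div_le_iff₀ hnn]
    calc (Nat.factorial n : ℝ) * Real.exp (n:ℝ) ≤ Real.exp 1 * Real.sqrt n * (n:ℝ)^n := h'
      _ = Real.exp 1 * Real.sqrt n * (n:ℝ)^n := rfl
  have hconv : Real.sqrt n * ((Real.sqrt n)^k)⁻¹ = (n:ℝ) ^ (((1:ℝ) - k)/2) := by
    rw [Real.sqrt_eq_rpow, ← Real.rpow_natCast ((n:ℝ)^((1:ℝ)/2 : ℝ)) k,
      ← Real.rpow_mul hn0.le, ← Real.rpow_neg hn0.le, ← Real.rpow_add hn0]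
    congr 1
    push_cast; ring
  calc mcoef s * fpow c s
      = ((Nat.factorial n : ℝ) / (n:ℝ)^n) *
          ∏ j ∈ U, (((n:ℝ) * c j) ^ s j / (Nat.factorial (s j) : ℝ)) := ha
    _ ≤ ((Nat.factorial n : ℝ) / (n:ℝ)^n) *
          (Real.exp (n:ℝ) * ((∏ j ∈ K, (2 * Real.exp 1 / Real.sqrt (c j))) * ((Real.sqrt n)^k)⁻¹)) := by
        apply mul_le_mul_of_nonneg_left hPU (by positivity)
    _ = ((Nat.factorial n : ℝ) * Real.exp (n:ℝ) / (n:ℝ)^n) *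
          ((∏ j ∈ K, (2 * Real.exp 1 / Real.sqrt (c j))) * ((Real.sqrt n)^k)⁻¹) := by ring
    _ ≤ (Real.exp 1 * Real.sqrt n) *
          ((∏ j ∈ K, (2 * Real.exp 1 / Real.sqrt (c j))) * ((Real.sqrt n)^k)⁻¹) := by
        apply mul_le_mul_of_nonneg_right hfe (by positivity)
    _ = (Real.exp 1 * ∏ j ∈ K, (2 * Real.exp 1 / Real.sqrt (c j))) *
          (Real.sqrt n * ((Real.sqrt n)^k)⁻¹) := by ring
    _ = (Real.exp 1 * ∏ j ∈ K, (2 * Real.exp 1 / Real.sqrt (c j))) *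
          (n:ℝ) ^ (((1:ℝ) - k)/2) := by rw [hconv]

lemma card_piAntidiag_le (A : Finset ℕ) (n : ℕ) :
    (Finset.piAntidiag A n).card ≤ (n+1) ^ A.card := by
  classical
  have : (Finset.piAntidiag A n).card ≤ (Finset.univ : Finset (A → Fin (n+1))).card := by
    apply Finset.card_le_card_of_injOn (fun k a => ⟨min (k a.1) n, by omega⟩)
    · intro k _; exact Finset.mem_univ _
    · intro k1 h1 k2 h2 heq
      rw [Finset.mem_coe, Finset.mem_piAntidiag] at h1 h2
      have hb : ∀ (k : ℕ → ℕ), A.sum k = n → (∀ i, k i ≠ 0 → i ∈ A) → ∀ a ∈ A, k a ≤ n := by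
        intro k hk hmem a ha
        rw [← hk]
        exact Finset.single_le_sum (fun i _ => Nat.zero_le _) ha
      funext i
      by_cases hi : i ∈ A
      · have e1 := congrFun heq ⟨i, hi⟩
        simp only [Fin.mk.injEq] at e1
        rw [min_eq_left (hb k1 h1.1 h1.2 i hi), min_eq_left (hb k2 h2.1 h2.2 i hi)] at e1
        exact e1
      · have z1 : k1 i = 0 := by by_contra hz; exact hi (h1.2 i hz)
        have z2 : k2 i = 0 := by by_contra hz; exact hi (h2.2 i hz)
        rw [z1, z2]
  simpa [Fintype.card_fun] using this

lemma forward {p : ℝ} (hp : 1 < p) {c : ℕ → ℝ} (hc : ∀ j, 0 < c j)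
    (hS : Summable (fun s : ℕ →₀ ℕ => (mcoef s * fpow c s) ^ p)) (A : Finset ℕ) :
    ∑ j ∈ A, c j ≤ 1 := by
  classical
  by_contra hcon
  push_neg at hcon
  set t := ∑ j ∈ A, c j with htdef
  have ht1 : 1 < t := hcon
  have ht0 : 0 < t := by linarith
  set T := ∑' s : ℕ →₀ ℕ, (mcoef s * fpow c s) ^ p with hT
  have hnn : ∀ s : ℕ →₀ ℕ, 0 ≤ (mcoef s * fpow c s) ^ p :=
    fun s => Real.rpow_nonneg (a_pos hc s).le p
  have hTnn : 0 ≤ T := tsum_nonneg hnn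
  have hle : ∀ s : ℕ →₀ ℕ, (mcoef s * fpow c s) ^ p ≤ T :=
    fun s => hS.le_tsum s (fun s' _ => hnn s')
  set X := T + 1 with hX
  have hX1 : 1 ≤ X := by linarith
  set m := A.card with hm
  -- find n with X * (n+1)^m < t^n
  obtain ⟨n, hn⟩ : ∃ n : ℕ, X * ((n:ℝ)+1) ^ m < t ^ n := by
    have hr : ‖t⁻¹‖ < 1 := by
      rw [Real.norm_eq_abs, abs_of_pos (by positivity)]
      rw [inv_lt_one_iff₀]; right; exact ht1
    have h0 := (summable_pow_mul_geometric_of_norm_lt_one m hr).tendsto_atTop_zero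
    have h1 : Filter.Tendsto (fun n : ℕ => ((n+1:ℕ):ℝ) ^ m * t⁻¹ ^ (n+1)) Filter.atTop (nhds 0) :=
      h0.comp (Filter.tendsto_add_atTop_nat 1)
    have h2 : Filter.Tendsto (fun n : ℕ => ((n+1:ℕ):ℝ) ^ m * t⁻¹ ^ (n+1) * t) Filter.atTop (nhds 0) := by
      simpa using h1.mul_const t
    have h3 := h2.eventually (eventually_lt_nhds (show (0:ℝ) < X⁻¹ by positivity))
    obtain ⟨n, hn⟩ := h3.exists
    refine ⟨n, ?_⟩
    have htn : (0:ℝ) < t ^ n := by positivity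
    have he : ((n+1:ℕ):ℝ) ^ m * t⁻¹ ^ (n+1) * t = ((n:ℝ)+1) ^ m / t ^ n := by
      push_cast
      rw [pow_succ, inv_pow]
      field_simp
    rw [he, div_lt_iff₀ htn] at hn
    calc X * ((n:ℝ)+1) ^ m < X * (X⁻¹ * t ^ n) := by
          apply mul_lt_mul_of_pos_left hn (by linarith : (0:ℝ) < X)
      _ = (X * X⁻¹) * t ^ n := by ring
      _ = t ^ n := by rw [mul_inv_cancel₀ (by positivity : X ≠ 0), one_mul]
  -- pigeonhole
  set N := (Finset.piAntidiag A n).card with hN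
  have hsum : ∑ k ∈ Finset.piAntidiag A n, ((Nat.multinomial A k : ℝ) * ∏ j ∈ A, c j ^ k j)
      = t ^ n := (Finset.sum_pow_eq_sum_piAntidiag A c n).symm ▸ rfl
  have hne : (Finset.piAntidiag A n).Nonempty := by
    apply Finset.nonempty_of_sum_ne_zero (f := fun k => (Nat.multinomial A k : ℝ) * ∏ j ∈ A, c j ^ k j)
    rw [hsum]
    positivity
  obtain ⟨k, hkmem, hk⟩ : ∃ k ∈ Finset.piAntidiag A n,
      t ^ n / N ≤ (Nat.multinomial A k : ℝ) * ∏ j ∈ A, c j ^ k j := by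
    apply Finset.exists_le_of_sum_le hne
    rw [hsum, Finset.sum_const, hN, nsmul_eq_mul]
    rw [mul_div_cancel₀]
    have : 0 < N := Finset.card_pos.mpr hne
    positivity
  -- convert to a finsupp
  rw [Finset.mem_piAntidiag] at hkmem
  set s : ℕ →₀ ℕ := Finsupp.onFinset A k (fun a ha => hkmem.2 a ha) with hs
  have hcoe : (s : ℕ → ℕ) = k := rfl
  have hsupp : s.support ⊆ A := Finsupp.support_onFinset_subset
  have has : mcoef s * fpow c s = (Nat.multinomial A k : ℝ) * ∏ j ∈ A, c j ^ k j := by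
    rw [a_eq_on_finset c s A hsupp, hcoe]
  have hcard : (0:ℝ) < N := by exact_mod_cast Finset.card_pos.mpr hne
  have hNle : (N:ℝ) ≤ ((n:ℝ)+1) ^ m := by
    have := card_piAntidiag_le A n
    rw [← hN, ← hm] at this
    calc (N:ℝ) ≤ ((n+1) ^ m : ℕ) := by exact_mod_cast this
      _ = ((n:ℝ)+1) ^ m := by push_cast; ring
  have hXlt : X < mcoef s * fpow c s := by
    have h7 : t ^ n / ((n:ℝ)+1) ^ m ≤ t ^ n / N := by
      apply div_le_div_of_nonneg_left (by positivity) hcard hNle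
    have h8 : X < t ^ n / ((n:ℝ)+1) ^ m := by
      rw [lt_div_iff₀ (by positivity)]
      linarith [hn]
    rw [has]
    linarith
  -- contradiction
  have hfinal : X ≤ (mcoef s * fpow c s) ^ p := by
    calc X = X ^ (1:ℝ) := (Real.rpow_one X).symm
      _ ≤ X ^ p := Real.rpow_le_rpow_of_exponent_le hX1 hp.le
      _ ≤ (mcoef s * fpow c s) ^ p :=
          Real.rpow_le_rpow (by linarith) hXlt.le (by linarith)
  have := hle s
  linarith

lemma backward {p : ℝ} (hp : 1 < p) {c : ℕ → ℝ} (hc : ∀ j, 0 < c j)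
    (hsc : Summable c) (ht : (∑' j, c j) ≤ 1) :
    Summable (fun s : ℕ →₀ ℕ => (mcoef s * fpow c s) ^ p) := by
  classical
  have hp0 : 0 < p - 1 := by linarith
  -- choose k
  set k : ℕ := Nat.ceil (4 / (p-1)) + 2 with hk
  set C : ℝ := Real.exp 1 * ∏ j ∈ Finset.range k, (2 * Real.exp 1 / Real.sqrt (c j)) with hC
  have hC0 : 0 < C := by
    apply mul_pos (Real.exp_pos 1)
    exact Finset.prod_pos fun j _ => by
      have := Real.sqrt_pos.mpr (hc j); positivity
  -- the block bound sequence
  set bb : ℕ → ℝ := fun n => if n = 0 then 1 else C * (n:ℝ) ^ (((1:ℝ) - k)/2) with hbb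
  have hbb0 : ∀ n, 0 ≤ bb n := by
    intro n
    by_cases h : n = 0 <;> simp only [hbb, h, if_true, if_false, reduceIte]
    · norm_num
    · positivity
  -- pointwise bound a_s ≤ bb (deg s)
  have hptw : ∀ s : ℕ →₀ ℕ, mcoef s * fpow c s ≤ bb (deg s) := by
    intro s
    by_cases h : deg s = 0
    · rw [hbb]
      simp only [h, if_true, reduceIte]
      rw [deg_eq_zero h, a_of_zero]
    · have h1 : 1 ≤ deg s := Nat.one_le_iff_ne_zero.mpr h
      have := pointwise_bound hc hsc ht k s h1
      rw [hbb]
      simp only [h, if_false, reduceIte]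
      exact this
  -- exponent summability
  have hexp : (((1:ℝ) - k)/2) * (p - 1) < -1 := by
    have hkge : 4 / (p-1) + 2 ≤ (k:ℝ) := by
      rw [hk]
      push_cast
      have := Nat.le_ceil (4 / (p-1))
      linarith
    have h4 : 0 < 4 / (p-1) := by positivity
    have hgap : 4 ≤ ((k:ℝ) - 1) * (p - 1) := by
      have h1 : 4 / (p-1) + 1 ≤ (k:ℝ) - 1 := by linarith
      have := mul_le_mul_of_nonneg_right h1 hp0.le
      rw [add_mul, div_mul_cancel₀ _ (ne_of_gt hp0)] at this
      nlinarith
    nlinarith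
  have hsummable_bb : Summable (fun n : ℕ => bb n ^ (p - 1)) := by
    rw [← summable_nat_add_iff 1]
    have h0 : Summable (fun n : ℕ => (n:ℝ) ^ ((((1:ℝ) - k)/2) * (p - 1))) :=
      Real.summable_nat_rpow.mpr hexp
    have h1 : Summable (fun n : ℕ => ((n+1:ℕ):ℝ) ^ ((((1:ℝ) - k)/2) * (p - 1))) :=
      (summable_nat_add_iff 1).mpr h0
    have h2 := h1.mul_left (C ^ (p-1))
    apply h2.congr
    intro n
    have hn1 : (0:ℝ) < ((n+1:ℕ):ℝ) := by positivity
    rw [hbb]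
    simp only [Nat.succ_ne_zero, if_false, reduceIte]
    rw [Real.mul_rpow hC0.le (by positivity), ← Real.rpow_mul hn1.le]
  -- ENNReal plumbing
  set a : (ℕ →₀ ℕ) → ℝ := fun s => mcoef s * fpow c s with hadef
  set g : (ℕ →₀ ℕ) → ℝ≥0∞ := fun s => ENNReal.ofReal (a s ^ p) with hg
  have hfib1 : ∀ n : ℕ, (∑' s : {s : ℕ →₀ ℕ // deg s = n}, ENNReal.ofReal (a s.1)) ≤ 1 := by
    intro n
    rw [ENNReal.tsum_eq_iSup_sum]
    apply iSup_le
    intro V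
    have h1 : ∑ s ∈ V, ENNReal.ofReal (a s.1) = ENNReal.ofReal (∑ s ∈ V, a s.1) :=
      (ENNReal.ofReal_sum_of_nonneg (fun s _ => (a_pos hc s.1).le)).symm
    have h2 : ∑ s' ∈ V.image Subtype.val, (fun x => mcoef x * fpow c x) s' = ∑ s ∈ V, a s.1 :=
      Finset.sum_image (fun x _ y _ h => Subtype.ext h)
    have h3 : ∑ s' ∈ V.image Subtype.val, mcoef s' * fpow c s' ≤ 1 := by
      apply sum_a_le_one hc hsc ht (n := n)
      intro s' hs'
      rw [Finset.mem_image] at hs'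
      obtain ⟨x, _, rfl⟩ := hs'
      exact x.2
    rw [h1]
    calc ENNReal.ofReal (∑ s ∈ V, a s.1) = ENNReal.ofReal (∑ s' ∈ V.image Subtype.val,
          mcoef s' * fpow c s') := by rw [h2]
      _ ≤ ENNReal.ofReal 1 := ENNReal.ofReal_le_ofReal h3
      _ = 1 := ENNReal.ofReal_one
  have hfiber : ∀ n : ℕ, (∑' s : {s : ℕ →₀ ℕ // deg s = n}, g s.1)
      ≤ ENNReal.ofReal (bb n ^ (p-1)) := by
    intro n
    have hterm : ∀ s : {s : ℕ →₀ ℕ // deg s = n},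
        g s.1 ≤ ENNReal.ofReal (bb n ^ (p-1)) * ENNReal.ofReal (a s.1) := by
      intro s
      have hpos : 0 < a s.1 := a_pos hc s.1
      rw [← ENNReal.ofReal_mul (Real.rpow_nonneg (hbb0 n) _)]
      apply ENNReal.ofReal_le_ofReal
      have h1 : a s.1 ^ p = a s.1 ^ (p-1) * a s.1 := by
        have h2 := Real.rpow_add hpos (p-1) 1
        rw [sub_add_cancel] at h2
        rw [h2, Real.rpow_one]
      rw [h1]
      apply mul_le_mul_of_nonneg_right _ hpos.le
      have h4 := hptw s.1
      rw [s.2] at h4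
      exact Real.rpow_le_rpow hpos.le h4 hp0.le
    calc (∑' s : {s : ℕ →₀ ℕ // deg s = n}, g s.1)
        ≤ ∑' s : {s : ℕ →₀ ℕ // deg s = n},
            ENNReal.ofReal (bb n ^ (p-1)) * ENNReal.ofReal (a s.1) :=
          ENNReal.tsum_le_tsum hterm
      _ = ENNReal.ofReal (bb n ^ (p-1)) * ∑' s : {s : ℕ →₀ ℕ // deg s = n},
            ENNReal.ofReal (a s.1) := ENNReal.tsum_mul_left
      _ ≤ ENNReal.ofReal (bb n ^ (p-1)) * 1 := mul_le_mul_right (hfib1 n) _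
      _ = ENNReal.ofReal (bb n ^ (p-1)) := mul_one _
  have htot : (∑' s : ℕ →₀ ℕ, g s) ≠ ⊤ := by
    have he : (∑' s : ℕ →₀ ℕ, g s) = ∑' (x : Σ n : ℕ, {s : ℕ →₀ ℕ // deg s = n}), g x.2.1 := by
      rw [← (Equiv.sigmaFiberEquiv deg).tsum_eq g]
      rfl
    rw [he, ENNReal.tsum_sigma']
    have hfin : (∑' n : ℕ, ENNReal.ofReal (bb n ^ (p-1))) ≠ ⊤ := by
      rw [← ENNReal.ofReal_tsum_of_nonneg (fun n => Real.rpow_nonneg (hbb0 n) _) hsummable_bb]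
      exact ENNReal.ofReal_ne_top
    exact ne_top_of_le_ne_top hfin (ENNReal.tsum_le_tsum hfiber)
  have hsum := ENNReal.summable_toReal htot
  apply hsum.congr
  intro s
  rw [hg]
  exact ENNReal.toReal_ofReal (Real.rpow_nonneg (a_pos hc s).le p)

end Stmt3Aux

/-- for `1 < p < ∞`, `(|s|!/s! · c^s)_s ∈ ℓ_p(F)` iff `‖c‖_{ℓ_1} ≤ 1`. -/
theorem stmt3 (p : ℝ) (hp : 1 < p) (c : ℕ → ℝ) (hc : ∀ j, 0 < c j) :
    Summable (fun s : ℕ →₀ ℕ => (mcoef s * fpow c s) ^ p) ↔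
      (Summable c ∧ (∑' j, c j) ≤ 1) := by
  constructor
  · intro hS
    have hA : ∀ A : Finset ℕ, ∑ j ∈ A, c j ≤ 1 := fun A => Stmt3Aux.forward hp hc hS A
    have hsc : Summable c := summable_of_sum_le (fun j => (hc j).le) hA
    exact ⟨hsc, Summable.tsum_le_of_sum_le hsc hA⟩
  · rintro ⟨hsc, ht⟩
    exact Stmt3Aux.backward hp hc hsc ht
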